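/- Let an extended N-series $G_*$ act on an extended N-series $K_*$. Then the induced maps $\bar\tau_m:G_m/G_{m+1}\to\mathrm{Der}_m(\overline{K}_\bullet)$ ($m\geq 1$) preserve Lie brackets: for $g\in G_m$, $g'\in G_n$, $\bar\tau_{m+n}([g,g']G_{m+n+1})=[\bar\tau_m(gG_{m+1}),\bar\tau_n(g'G_{n+1})]$. -/

import Mathlib

open scoped commutatorElement

/-- A purely group-theoretic commutation computation used in the proof of
`johnson_morphism_bracket`. -/
private lemma johnson_comm_calc {Q : Type*} [Group Q] (B C P R : Q)
    (h2 : Commute B P) (h3 : Commute C R) (h5 : Commute P R) :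
    P * (C⁻¹ * (P⁻¹ * (R⁻¹ * (B⁻¹ * (P * (C * B)))))) =
      P * (R⁻¹ * (C⁻¹ * (B⁻¹ * (C * B)))) := by
  have hB : ∀ x : Q, B⁻¹ * (P * x) = P * (B⁻¹ * x) := fun x => by
    rw [← mul_assoc, h2.inv_left.eq, mul_assoc]
  have hR : ∀ x : Q, R⁻¹ * (P * x) = P * (R⁻¹ * x) := fun x => by
    rw [← mul_assoc, h5.symm.inv_left.eq, mul_assoc]
  have hCR : C⁻¹ * R⁻¹ = R⁻¹ * C⁻¹ := h3.inv_left.inv_right.eq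
  rw [hB, hR, inv_mul_cancel_left, ← mul_assoc C⁻¹ R⁻¹, hCR, mul_assoc]

/-- Let an extended N-series `G_*` act on an extended N-series `K_*`.  The induced
Johnson homomorphisms `τ̄ₘ : Gₘ/G_{m+1} → Derₘ(K̄_•)` preserve Lie brackets: for
`g ∈ Gₘ`, `g' ∈ Gₙ` (`m, n ≥ 1`) and `a ∈ Kᵢ`,
`[⁅g,g'⁆, a] ≡ [g,[g',a]] ⬝ [g',[g,a]]⁻¹ ⬝ (⁅[g,a],[g',a]⁆⁻¹ if i = 0)`
modulo `K_{m+n+i+1}`, where `[g,a] = g(a)a⁻¹` and `⁅g,g'⁆ = gg'g⁻¹g'⁻¹`. -/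
theorem johnson_morphism_bracket {G K : Type*} [Group G] [Group K]
    (φ : G →* MulAut K) (Kf : ℕ → Subgroup K)
    (hK0 : Kf 0 = ⊤) (hdesc : ∀ i, Kf (i + 1) ≤ Kf i)
    (hcomm : ∀ i j, ⁅Kf i, Kf j⁆ ≤ Kf (i + j))
    (G' : ℕ → Subgroup G)
    (hG'0 : G' 0 = ⊤) (hG'desc : ∀ i, G' (i + 1) ≤ G' i)
    (hG'comm : ∀ i j, ⁅G' i, G' j⁆ ≤ G' (i + j))
    (hact : ∀ m n, ∀ g ∈ G' m, ∀ k ∈ Kf n, φ g k * k⁻¹ ∈ Kf (m + n)) :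
    ∀ m n, 1 ≤ m → 1 ≤ n → ∀ g ∈ G' m, ∀ g' ∈ G' n,
      -- in positive degrees `i ≥ 1`:
      (∀ i, 1 ≤ i → ∀ a ∈ Kf i,
        ((φ g (φ g' a * a⁻¹) * (φ g' a * a⁻¹)⁻¹) *
            (φ g' (φ g a * a⁻¹) * (φ g a * a⁻¹)⁻¹)⁻¹)⁻¹ *
          (φ ⁅g, g'⁆ a * a⁻¹) ∈ Kf (m + n + i + 1)) ∧
      -- in degree `0` (with the correction term `⁅[g,a],[g',a]⁆`):
      (∀ a : K,
        ((φ g (φ g' a * a⁻¹) * (φ g' a * a⁻¹)⁻¹) *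
            (φ g' (φ g a * a⁻¹) * (φ g a * a⁻¹)⁻¹)⁻¹ *
            ⁅φ g a * a⁻¹, φ g' a * a⁻¹⁆⁻¹)⁻¹ *
          (φ ⁅g, g'⁆ a * a⁻¹) ∈ Kf (m + n + 1)) := by
  have hmono : ∀ p q : ℕ, p ≤ q → Kf q ≤ Kf p := by
    intro p q h
    induction h with
    | refl => exact le_rfl
    | @step r h ih => exact le_trans (hdesc r) ih
  have hnorm : ∀ j, (Kf j).Normal := by
    intro j
    refine ⟨fun x hx k => ?_⟩
    have h1 : ⁅k, x⁆ ∈ Kf j := by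
      have h2 := hcomm 0 j
        (Subgroup.commutator_mem_commutator (by rw [hK0]; exact Subgroup.mem_top k) hx)
      simpa using h2
    have h3 : k * x * k⁻¹ = ⁅k, x⁆ * x := by
      simp only [commutatorElement_def]; group
    rw [h3]; exact mul_mem h1 hx
  have hpres : ∀ p j : ℕ, ∀ g₀ ∈ G' p, ∀ x ∈ Kf j, φ g₀ x ∈ Kf j := by
    intro p j g₀ hg₀ x hx
    have h1 := hact p j g₀ hg₀ x hx
    have h2 : φ g₀ x = (φ g₀ x * x⁻¹) * x := by group
    rw [h2]; exact mul_mem (hmono j (p + j) (Nat.le_add_left _ _) h1) hx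
  intro m n hm hn g hg g' hg'
  have hgi : g⁻¹ ∈ G' m := inv_mem hg
  have hg'i : g'⁻¹ ∈ G' n := inv_mem hg'
  -- the main congruence, valid in every degree `i ≥ 0`
  have main : ∀ i : ℕ, ∀ a ∈ Kf i,
      ((φ g (φ g' a * a⁻¹) * (φ g' a * a⁻¹)⁻¹) *
          (φ g' (φ g a * a⁻¹) * (φ g a * a⁻¹)⁻¹)⁻¹ *
          ⁅φ g a * a⁻¹, φ g' a * a⁻¹⁆⁻¹)⁻¹ *
        (φ ⁅g, g'⁆ a * a⁻¹) ∈ Kf (m + n + i + 1) := by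
    intro i a ha
    haveI : (Kf (m + n + i + 1)).Normal := hnorm _
    -- basic elements
    set b := φ g a * a⁻¹ with hb_def
    set c := φ g' a * a⁻¹ with hc_def
    have hb : b ∈ Kf (m + i) := by rw [hb_def]; exact hact m i g hg a ha
    have hc : c ∈ Kf (n + i) := by rw [hc_def]; exact hact n i g' hg' a ha
    set k₃ := φ g c * c⁻¹ with hk3_def
    set k₄ := φ g' b * b⁻¹ with hk4_def
    have hk₃mem : k₃ ∈ Kf (m + (n + i)) := by rw [hk3_def]; exact hact m (n + i) g hg c hc
    have hk₄mem : k₄ ∈ Kf (n + (m + i)) := by rw [hk4_def]; exact hact n (m + i) g' hg' b hb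
    set c' := φ g'⁻¹ c⁻¹ with hc'_def
    set b' := φ g⁻¹ b⁻¹ with hb'_def
    have hc'mem : c' ∈ Kf (n + i) := by
      rw [hc'_def]; exact hpres n (n + i) g'⁻¹ hg'i c⁻¹ (inv_mem hc)
    have hb'mem : b' ∈ Kf (m + i) := by
      rw [hb'_def]; exact hpres m (m + i) g⁻¹ hgi b⁻¹ (inv_mem hb)
    set d := φ g⁻¹ c' * c'⁻¹ with hd_def
    set k₁ := φ g' b' * b'⁻¹ with hk1_def
    have hd_mem : d ∈ Kf (m + (n + i)) := by
      rw [hd_def]; exact hact m (n + i) g⁻¹ hgi c' hc'mem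
    have hk₁mem : k₁ ∈ Kf (n + (m + i)) := by
      rw [hk1_def]; exact hact n (m + i) g' hg' b' hb'mem
    set w := φ g'⁻¹ c⁻¹ * c with hw_def
    set w' := φ g⁻¹ b⁻¹ * b with hw'_def
    set u := φ g⁻¹ c⁻¹ * c with hu_def
    set u' := φ g' b⁻¹ * b with hu'_def
    clear_value b c k₃ k₄ c' b' d k₁ w w' u u'
    have hw_mem : w ∈ Kf (n + (n + i)) := by
      rw [hw_def]
      have := hact n (n + i) g'⁻¹ hg'i c⁻¹ (inv_mem hc); rwa [inv_inv] at this
    have hw'_mem : w' ∈ Kf (m + (m + i)) := by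
      rw [hw'_def]
      have := hact m (m + i) g⁻¹ hgi b⁻¹ (inv_mem hb); rwa [inv_inv] at this
    have hu_mem : u ∈ Kf (m + (n + i)) := by
      rw [hu_def]
      have := hact m (n + i) g⁻¹ hgi c⁻¹ (inv_mem hc); rwa [inv_inv] at this
    have hu'_mem : u' ∈ Kf (n + (m + i)) := by
      rw [hu'_def]
      have := hact n (m + i) g' hg' b⁻¹ (inv_mem hb); rwa [inv_inv] at this
    -- applications of inverse automorphisms
    have happg : ∀ x : K, φ g (φ g⁻¹ x) = x := fun x => by
      rw [map_inv]; exact MulAut.apply_inv_self K (φ g) x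
    have happg2 : ∀ x : K, φ g⁻¹ (φ g x) = x := fun x => by
      rw [map_inv]; exact MulAut.inv_apply_self K (φ g) x
    have happg' : ∀ x : K, φ g' (φ g'⁻¹ x) = x := fun x => by
      rw [map_inv]; exact MulAut.apply_inv_self K (φ g') x
    have happg2' : ∀ x : K, φ g'⁻¹ (φ g' x) = x := fun x => by
      rw [map_inv]; exact MulAut.inv_apply_self K (φ g') x
    -- the quotient map
    set q : K →* K ⧸ Kf (m + n + i + 1) := QuotientGroup.mk' (Kf (m + n + i + 1)) with hq_def
    have hqeq : ∀ x y : K, q x = q y ↔ x⁻¹ * y ∈ Kf (m + n + i + 1) := by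
      intro x y
      rw [hq_def]
      simp only [QuotientGroup.mk'_apply]
      exact QuotientGroup.eq
    have key : ∀ p₁ p₂ : ℕ, m + n + i + 1 ≤ p₁ + p₂ → ∀ x ∈ Kf p₁, ∀ y ∈ Kf p₂,
        q x * q y = q y * q x := by
      intro p₁ p₂ hp x hx y hy
      rw [← map_mul, ← map_mul, hqeq]
      have h1 : (x * y)⁻¹ * (y * x) = ⁅y⁻¹, x⁻¹⁆ := by
        simp only [commutatorElement_def]; group
      rw [h1]
      exact hmono _ (p₂ + p₁) (by omega)
        (hcomm p₂ p₁ (Subgroup.commutator_mem_commutator (inv_mem hy) (inv_mem hx)))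
    have hfix : ∀ p₁ p₂ : ℕ, m + n + i + 1 ≤ p₁ + p₂ → ∀ g₀ ∈ G' p₁, ∀ x ∈ Kf p₂,
        q (φ g₀ x) = q x := by
      intro p₁ p₂ hp g₀ hg₀ x hx
      rw [hqeq]
      have h1 : φ g₀ x * x⁻¹ ∈ Kf (m + n + i + 1) :=
        hmono _ (p₁ + p₂) hp (hact p₁ p₂ g₀ hg₀ x hx)
      have h2 : (φ g₀ x)⁻¹ * x = (φ g₀ x)⁻¹ * (φ g₀ x * x⁻¹)⁻¹ * ((φ g₀ x)⁻¹)⁻¹ := by group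
      rw [h2]
      exact (hnorm (m + n + i + 1)).conj_mem _ (inv_mem h1) _
    -- exact identities in K
    have hgc : φ g c = k₃ * c := by rw [hk3_def]; group
    have hg'b : φ g' b = k₄ * b := by rw [hk4_def]; group
    have hqgc : q (φ g c) = q k₃ * q c := by rw [hgc, map_mul]
    have hI1 : φ g'⁻¹ a = c' * a := by
      have h1 : c⁻¹ = a * (φ g' a)⁻¹ := by rw [hc_def]; group
      rw [hc'_def, h1, map_mul (φ g'⁻¹) a ((φ g' a)⁻¹), map_inv (φ g'⁻¹) (φ g' a), happg2']
      group
    have hI2 : φ g⁻¹ a = b' * a := by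
      have h1 : b⁻¹ = a * (φ g a)⁻¹ := by rw [hb_def]; group
      rw [hb'_def, h1, map_mul (φ g⁻¹) a ((φ g a)⁻¹), map_inv (φ g⁻¹) (φ g a), happg2]
      group
    have hX : φ ⁅g, g'⁆ a = φ g (φ g' (φ g⁻¹ (φ g'⁻¹ a))) := by
      rw [commutatorElement_def, map_mul, map_mul, map_mul]
      rfl
    have hXfin : φ ⁅g, g'⁆ a * a⁻¹ =
        φ g (φ g' (φ g⁻¹ c')) * (φ g (φ g' b') * (φ g c * b)) := by
      rw [hX, hI1, map_mul, hI2, map_mul, map_mul, map_mul, map_mul,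
        show φ g' a = c * a from by rw [hc_def]; group, map_mul,
        show φ g a = b * a from by rw [hb_def]; group]
      group
    -- congruences in the quotient
    have hφg'd_mem : φ g' d ∈ Kf (m + (n + i)) := hpres n _ g' hg' d hd_mem
    have hA1 : q (φ g (φ g' (φ g⁻¹ c'))) = q k₃ * ((q c)⁻¹ * (q k₃)⁻¹) := by
      have e0 : φ g⁻¹ c' = d * c' := by rw [hd_def]; group
      have e1 : φ g' c' = c⁻¹ := by rw [hc'_def]; exact happg' c⁻¹
      have e2 : φ g c⁻¹ = c⁻¹ * k₃⁻¹ := by rw [map_inv, hgc]; group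
      have hdk3 : q d = q k₃ := by
        have hwc : c' = w * c⁻¹ := by rw [hc'_def, hw_def]; group
        have e3 : d = φ g⁻¹ w * (u * w⁻¹) := by
          rw [hd_def, hwc, hu_def, map_mul]; group
        have hwu : q w * q u = q u * q w :=
          key (n + (n + i)) (m + (n + i)) (by omega) w hw_mem u hu_mem
        have e4 : q u = q k₃ := by
          have e5 : φ g u = c⁻¹ * (k₃ * c) := by
            rw [hu_def, map_mul, happg c⁻¹, hgc]
          have e6 : q u = q (φ g u) := (hfix m (m + (n + i)) (by omega) g hg u hu_mem).symm
          have hck3 : q k₃ * q c = q c * q k₃ :=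
            key (m + (n + i)) (n + i) (by omega) k₃ hk₃mem c hc
          rw [e6, e5, map_mul, map_mul, map_inv, hck3, inv_mul_cancel_left]
        calc q d = q (φ g⁻¹ w) * (q u * (q w)⁻¹) := by
              rw [e3, map_mul q, map_mul q, map_inv q w]
          _ = q w * (q u * (q w)⁻¹) := by
              rw [hfix m (n + (n + i)) (by omega) g⁻¹ hgi w hw_mem]
          _ = q u * (q w * (q w)⁻¹) := by rw [← mul_assoc, hwu, mul_assoc]
          _ = q u := by group
          _ = q k₃ := e4
      calc q (φ g (φ g' (φ g⁻¹ c')))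
          = q (φ g (φ g' d)) * q (φ g c⁻¹) := by
            rw [e0, map_mul, e1, map_mul, map_mul]
        _ = q d * ((q c)⁻¹ * (q k₃)⁻¹) := by
            rw [e2, hfix m (m + (n + i)) (by omega) g hg _ hφg'd_mem,
              hfix n (m + (n + i)) (by omega) g' hg' d hd_mem, map_mul, map_inv, map_inv]
        _ = q k₃ * ((q c)⁻¹ * (q k₃)⁻¹) := by rw [hdk3]
    have hbk4 : Commute (q b) (q k₄) :=
      key (m + i) (n + (m + i)) (by omega) b hb k₄ hk₄mem
    have hk1k4 : q k₁ = (q k₄)⁻¹ := by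
      have hw'b : b' = w' * b⁻¹ := by rw [hb'_def, hw'_def]; group
      have e3 : k₁ = φ g' w' * (u' * w'⁻¹) := by
        rw [hk1_def, hw'b, hu'_def, map_mul]; group
      have hw'u' : q w' * q u' = q u' * q w' :=
        key (m + (m + i)) (n + (m + i)) (by omega) w' hw'_mem u' hu'_mem
      have e4 : q u' = (q k₄)⁻¹ := by
        have e5 : u' = b⁻¹ * (k₄⁻¹ * b) := by rw [hu'_def, map_inv, hg'b]; group
        have hbk4inv : (q k₄)⁻¹ * q b = q b * (q k₄)⁻¹ := hbk4.inv_right.eq.symm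
        rw [e5, map_mul, map_mul, map_inv, map_inv, hbk4inv, inv_mul_cancel_left]
      calc q k₁ = q (φ g' w') * (q u' * (q w')⁻¹) := by
            rw [e3, map_mul q, map_mul q, map_inv q w']
        _ = q w' * (q u' * (q w')⁻¹) := by
            rw [hfix n (m + (m + i)) (by omega) g' hg' w' hw'_mem]
        _ = q u' * (q w' * (q w')⁻¹) := by rw [← mul_assoc, hw'u', mul_assoc]
        _ = q u' := by group
        _ = (q k₄)⁻¹ := e4
    have hA2 : q (φ g (φ g' b')) = (q k₄)⁻¹ * (q b)⁻¹ := by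
      have e1 : φ g' b' = k₁ * b' := by rw [hk1_def]; group
      have e2 : φ g b' = b⁻¹ := by rw [hb'_def]; exact happg b⁻¹
      calc q (φ g (φ g' b')) = q (φ g k₁) * q b⁻¹ := by
            rw [e1, map_mul, e2, map_mul]
        _ = q k₁ * (q b)⁻¹ := by
            rw [hfix m (n + (m + i)) (by omega) g hg k₁ hk₁mem, map_inv]
        _ = (q k₄)⁻¹ * (q b)⁻¹ := by rw [hk1k4]
    -- the commutator correction term
    have hz_mem : ⁅c⁻¹, b⁻¹⁆ ∈ Kf (n + i + (m + i)) :=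
      hcomm (n + i) (m + i) (Subgroup.commutator_mem_commutator (inv_mem hc) (inv_mem hb))
    have hcb_mem : c * b ∈ Kf (i + 1) :=
      mul_mem (hmono (i + 1) (n + i) (by omega) hc) (hmono (i + 1) (m + i) (by omega) hb)
    have hzeq : q (⁅b, c⁆⁻¹) = (q c)⁻¹ * ((q b)⁻¹ * (q c * q b)) := by
      have e1 : ⁅b, c⁆⁻¹ = (c * b) * ⁅c⁻¹, b⁻¹⁆ * (c * b)⁻¹ := by
        simp only [commutatorElement_def]; group
      have e2 : q (c * b) * q ⁅c⁻¹, b⁻¹⁆ = q ⁅c⁻¹, b⁻¹⁆ * q (c * b) :=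
        key (i + 1) (n + i + (m + i)) (by omega) _ hcb_mem _ hz_mem
      calc q (⁅b, c⁆⁻¹) = q (c * b) * q ⁅c⁻¹, b⁻¹⁆ * (q (c * b))⁻¹ := by
            rw [e1, map_mul, map_mul, map_inv]
        _ = q ⁅c⁻¹, b⁻¹⁆ * q (c * b) * (q (c * b))⁻¹ := by rw [e2]
        _ = q ⁅c⁻¹, b⁻¹⁆ := by group
        _ = (q c)⁻¹ * ((q b)⁻¹ * (q c * q b)) := by
            rw [show ⁅c⁻¹, b⁻¹⁆ = c⁻¹ * (b⁻¹ * (c * b)) from by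
              simp only [commutatorElement_def]; group]
            rw [map_mul, map_mul, map_mul, map_inv, map_inv]
    -- assembling everything
    rw [← hqeq]
    have hqX : q (φ ⁅g, g'⁆ a * a⁻¹) =
        q k₃ * ((q c)⁻¹ * ((q k₃)⁻¹ * ((q k₄)⁻¹ * ((q b)⁻¹ * (q k₃ * (q c * q b)))))) := by
      rw [hXfin, map_mul, map_mul, map_mul, hA1, hA2, hqgc]
      simp only [mul_assoc]
    have hqT : q (k₃ * k₄⁻¹ * ⁅b, c⁆⁻¹) =
        q k₃ * ((q k₄)⁻¹ * ((q c)⁻¹ * ((q b)⁻¹ * (q c * q b)))) := by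
      rw [map_mul, map_mul, map_inv, hzeq]
      simp only [mul_assoc]
    have hBP : Commute (q b) (q k₃) :=
      key (m + i) (m + (n + i)) (by omega) b hb k₃ hk₃mem
    have hPR : Commute (q k₃) (q k₄) :=
      key (m + (n + i)) (n + (m + i)) (by omega) k₃ hk₃mem k₄ hk₄mem
    have hCR : Commute (q c) (q k₄) :=
      key (n + i) (n + (m + i)) (by omega) c hc k₄ hk₄mem
    rw [hqT, hqX]
    exact (johnson_comm_calc (q b) (q c) (q k₃) (q k₄) hBP hCR hPR).symm
  refine ⟨?_, ?_⟩
  · intro i hi a ha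
    have hL := main i a ha
    have hb := hact m i g hg a ha
    have hc := hact n i g' hg' a ha
    have hC : ⁅φ g a * a⁻¹, φ g' a * a⁻¹⁆ ∈ Kf (m + n + i + 1) :=
      hmono (m + n + i + 1) (m + i + (n + i)) (by omega)
        (hcomm (m + i) (n + i) (Subgroup.commutator_mem_commutator hb hc))
    have e : ∀ P Q C X : K, (P * Q⁻¹)⁻¹ * X = C⁻¹ * ((P * Q⁻¹ * C⁻¹)⁻¹ * X) := by
      intro P Q C X; group
    rw [e (φ g (φ g' a * a⁻¹) * (φ g' a * a⁻¹)⁻¹)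
      (φ g' (φ g a * a⁻¹) * (φ g a * a⁻¹)⁻¹)
      ⁅φ g a * a⁻¹, φ g' a * a⁻¹⁆ (φ ⁅g, g'⁆ a * a⁻¹)]
    exact mul_mem (inv_mem hC) hL
  · intro a
    exact main 0 a (by rw [hK0]; exact Subgroup.mem_top a)
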